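/- Let G be a finite group, I a left ideal of F_q[G], and let b ↦ b̂ be the F_q-linear map sending Σ b_g g to Σ b_g g⁻¹. Then the euclidean dual I^{⊥_E} equals {b̂ : b ∈ Ann_r(I)}, where Ann_r(I) = {b ∈ F_q[G] : ab = 0 for all a ∈ I} is the right annihilator of I. -/

import Mathlib

open Finset

lemma conv_apply {F : Type*} [Field F] {G : Type*} [Group G] [Fintype G]
    (a c : MonoidAlgebra F G) (x : G) :
    (a * c).coeff x = ∑ g : G, a.coeff g * c.coeff (g⁻¹ * x) := by
  classical
  have h := MonoidAlgebra.coeff_mul_antidiag a c x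
    (Finset.univ.map ⟨fun g => (g, g⁻¹ * x), by
      intro g h hgh
      simpa using congrArg Prod.fst hgh⟩)
    (by
      intro p
      simp only [Finset.mem_map, Finset.mem_univ, Function.Embedding.coeFn_mk, true_and]
      constructor
      · rintro ⟨g, rfl⟩; show g * (g⁻¹ * x) = x; group
      · rintro hp; exact ⟨p.1, Prod.ext rfl (by show p.1⁻¹ * x = p.2; rw [← hp]; group)⟩)
  rw [h, Finset.sum_map]
  rfl

theorem stmt_13 (F : Type*) [Field F] [Fintype F]
    (G : Type*) [Group G] [Fintype G]
    (I : Ideal (MonoidAlgebra F G)) :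
    ∀ b : MonoidAlgebra F G,
      ((∀ a ∈ I, ∑ g : G, a.coeff g * b.coeff g = 0) ↔
        ∃ c : MonoidAlgebra F G, (∀ a ∈ I, a * c = 0) ∧ ∀ g : G, b.coeff g = c.coeff g⁻¹) := by
  classical
  intro b
  constructor
  · intro hb
    refine ⟨MonoidAlgebra.ofCoeff (Finsupp.equivMapDomain (Equiv.inv G) b.coeff), ?_, ?_⟩
    · intro a ha
      ext x
      rw [conv_apply]
      have ha' : (MonoidAlgebra.single x⁻¹ (1 : F)) * a ∈ I := I.mul_mem_left _ ha
      have := hb _ ha'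
      simp only [MonoidAlgebra.coeff_single_mul_apply, one_mul, inv_inv] at this
      rw [MonoidAlgebra.coeff_zero, Finsupp.zero_apply, ← this]
      refine Fintype.sum_equiv (Equiv.mulLeft x⁻¹) _ _ (fun g => ?_)
      simp [Finsupp.equivMapDomain_apply, Equiv.inv_apply, mul_assoc]
    · intro g
      simp [Finsupp.equivMapDomain_apply, Equiv.inv_apply]
  · rintro ⟨c, hc, hbc⟩ a ha
    have := congrArg (fun f : MonoidAlgebra F G => f.coeff 1) (hc a ha)
    simp only [conv_apply] at this
    calc ∑ g : G, a.coeff g * b.coeff g = ∑ g : G, a.coeff g * c.coeff (g⁻¹ * 1) := by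
          simp [hbc]
      _ = 0 := this
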